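/- arXiv:1701.08653 — 3 statements merged into one kernel-verified Lean document; each statement's English description precedes it below -/
import Mathlib

section
/- Let A be a C*-algebra and V a closed linear subspace of A such that the closed linear span of V*VV*V is contained in the closed linear span of V*V. Then V is contained in the closed linear span of VV*V. -/
open scoped Pointwise ContinuousMapZero

/-- The closed linear span of a subset of a C*-algebra. -/
noncomputable def cspan {A : Type*} [NonUnitalCStarAlgebra A] (S : Set A) : Submodule ℂ A :=
  (Submodule.span ℂ S).topologicalClosure

/-- The product of two subsets in the quantale `Max A`: the closed linear span of
the set of pointwise products. -/
noncomputable def qmul {A : Type*} [NonUnitalCStarAlgebra A] (V W : Set A) : Submodule ℂ A :=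
  cspan (V * W)

set_option maxHeartbeats 2000000 in
/-- If the closed linear span of `V*VV*V` is contained in the closed linear span of `V*V`,
then `V ⊆` the closed linear span of `VV*V`. -/
theorem stmt0 {A : Type*} [NonUnitalCStarAlgebra A] (V : Submodule ℂ A)
    (hV : IsClosed (V : Set A))
    (h : (qmul (qmul (star (V : Set A)) (V : Set A) : Set A)
            (qmul (star (V : Set A)) (V : Set A) : Set A) : Set A)
          ⊆ (qmul (star (V : Set A)) (V : Set A) : Set A)) :
    (V : Set A) ⊆
      (qmul (qmul (V : Set A) (star (V : Set A)) : Set A) (V : Set A) : Set A) := by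
  intro a ha
  set B : Submodule ℂ A := qmul (star (V : Set A)) (V : Set A) with hBdef
  set T : Submodule ℂ A := qmul (qmul (V : Set A) (star (V : Set A)) : Set A) (V : Set A)
    with hTdef
  have hsub : ∀ (S : Set A), S ⊆ (cspan S : Set A) := fun S =>
    (Submodule.subset_span (R := ℂ)).trans (Submodule.le_topologicalClosure _)
  have hBclosed : IsClosed (B : Set A) := Submodule.isClosed_topologicalClosure _
  have hTclosed : IsClosed (T : Set A) := Submodule.isClosed_topologicalClosure _
  have hmulB : ∀ x ∈ B, ∀ y ∈ B, x * y ∈ B := by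
    intro x hx y hy
    exact h (hsub _ (Set.mul_mem_mul hx hy))
  have haT : ∀ x ∈ B, a * x ∈ T := by
    intro x hx
    have hSclosed : IsClosed ((T.comap (LinearMap.mulLeft ℂ a) : Submodule ℂ A) : Set A) :=
      hTclosed.preimage (continuous_const.mul continuous_id)
    have hBS : B ≤ T.comap (LinearMap.mulLeft ℂ a) := by
      apply Submodule.topologicalClosure_minimal
      · rw [Submodule.span_le]
        rintro _ ⟨u, hu, w, hw, rfl⟩
        show a * (u * w) ∈ T
        rw [← mul_assoc]
        exact hsub _ (Set.mul_mem_mul (hsub _ (Set.mul_mem_mul ha hu)) hw)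
      · exact hSclosed
    exact hBS hx
  have hb : IsSelfAdjoint (star a * a) := IsSelfAdjoint.star_mul_self a
  have hbB : star a * a ∈ B :=
    hsub _ (Set.mul_mem_mul (Set.mem_star.mpr (by simpa using ha)) ha)
  have h0 : ((0 : quasispectrum ℝ (star a * a)) : ℝ) = 0 :=
    quasispectrum.coe_zero (R := ℝ) (star a * a)
  have key : ∀ f : C(quasispectrum ℝ (star a * a), ℝ)₀, cfcₙHom hb f ∈ B := by
    intro f
    induction f using ContinuousMapZero.induction_on_of_compact with
    | zero => simpa using B.zero_mem
    | id =>
      rw [show cfcₙHom hb (.id _) = star a * a from cfcₙHom_id hb]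
      exact hbB
    | star_id =>
      rw [map_star, show cfcₙHom hb (.id _) = star a * a from cfcₙHom_id hb, hb.star_eq]
      exact hbB
    | add f g hf hg => rw [map_add]; exact B.add_mem hf hg
    | mul f g hf hg => rw [map_mul]; exact hmulB _ hf _ hg
    | smul r f hf => rw [map_smul]; exact B.smul_of_tower_mem r hf
    | frequently f hf =>
      have hcl : IsClosed {g : C(quasispectrum ℝ (star a * a), ℝ)₀ | cfcₙHom hb g ∈ B} :=
        hBclosed.preimage (cfcₙHom_isClosedEmbedding hb).continuous
      exact hcl.closure_subset (mem_closure_iff_frequently.mpr hf)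
  suffices hmain : ∀ ε : ℝ, 0 < ε → ∃ y ∈ T, ‖a - y‖ * ‖a - y‖ ≤ ε by
    refine hTclosed.closure_subset ?_
    rw [Metric.mem_closure_iff]
    intro δ hδ
    obtain ⟨y, hyT, hy⟩ := hmain (δ ^ 2 / 2) (by positivity)
    refine ⟨y, hyT, ?_⟩
    rw [dist_eq_norm]
    nlinarith [norm_nonneg (a - y)]
  intro ε hε
  set f : ℝ → ℝ := fun t => t * t / (ε ^ 2 + t * t) with hfdef
  have hfc : Continuous f := by
    apply Continuous.div (continuous_id.mul continuous_id) (continuous_const.add (continuous_id.mul continuous_id))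
    intro t
    have h' : (0:ℝ) < ε ^ 2 + t * t := by nlinarith [mul_self_nonneg t, hε]
    exact h'.ne'
  have hf0 : f 0 = 0 := by simp [hfdef]
  set c := cfcₙ f (star a * a) with hcdef
  have hcB : c ∈ B := by
    rw [hcdef, cfcₙ_apply f (star a * a) hfc.continuousOn hf0 hb]
    exact key _
  refine ⟨a * c, haT c hcB, ?_⟩
  have hcsa : IsSelfAdjoint c := by rw [hcdef]; exact cfcₙ_predicate f (star a * a)
  set g : ℝ → ℝ := fun t => (t - t * f t) - (f t * t - f t * (t * f t)) with hgdef
  have hid : ContinuousOn (fun t : ℝ => t) (quasispectrum ℝ (star a * a)) := continuousOn_id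
  have hmul1 : Continuous (fun t : ℝ => t * f t) := continuous_id.mul hfc
  have h1 : cfcₙ (fun t : ℝ => t * f t) (star a * a) = (star a * a) * c := by
    rw [cfcₙ_mul (fun t : ℝ => t) f (star a * a) hid rfl hfc.continuousOn hf0,
      cfcₙ_id' ℝ (star a * a) hb, ← hcdef]
  have h2 : cfcₙ (fun t : ℝ => f t * t) (star a * a) = c * (star a * a) := by
    rw [cfcₙ_mul f (fun t : ℝ => t) (star a * a) hfc.continuousOn hf0 hid rfl,
      cfcₙ_id' ℝ (star a * a) hb, ← hcdef]
  have h3 : cfcₙ (fun t : ℝ => f t * (t * f t)) (star a * a) = c * ((star a * a) * c) := by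
    rw [cfcₙ_mul f (fun t : ℝ => t * f t) (star a * a) hfc.continuousOn hf0
      hmul1.continuousOn (by simp [hf0]), h1, ← hcdef]
  have h4 : cfcₙ (fun t : ℝ => t - t * f t) (star a * a)
      = (star a * a) - (star a * a) * c := by
    rw [cfcₙ_sub (fun t : ℝ => t) (fun t : ℝ => t * f t) (star a * a) hid rfl
      hmul1.continuousOn (by simp [hf0]), cfcₙ_id' ℝ (star a * a) hb, h1]
  have h5 : cfcₙ (fun t : ℝ => f t * t - f t * (t * f t)) (star a * a)
      = c * (star a * a) - c * ((star a * a) * c) := by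
    rw [cfcₙ_sub (fun t : ℝ => f t * t) (fun t : ℝ => f t * (t * f t)) (star a * a)
      (hfc.mul continuous_id).continuousOn (by simp [hf0])
      (hfc.mul hmul1).continuousOn (by simp [hf0]), h2, h3]
  have h6 : cfcₙ g (star a * a)
      = ((star a * a) - (star a * a) * c) - (c * (star a * a) - c * ((star a * a) * c)) := by
    rw [hgdef, cfcₙ_sub (fun t : ℝ => t - t * f t)
      (fun t : ℝ => f t * t - f t * (t * f t)) (star a * a)
      (continuous_id.sub hmul1).continuousOn (by simp [hf0])
      ((hfc.mul continuous_id).sub (hfc.mul hmul1)).continuousOn (by simp [hf0]), h4, h5]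
  have key2 : star (a - a * c) * (a - a * c) = cfcₙ g (star a * a) := by
    rw [h6, star_sub, star_mul, hcsa.star_eq]
    noncomm_ring
  have hbound : ‖cfcₙ g (star a * a)‖ ≤ ε := by
    apply norm_cfcₙ_le
    intro t ht
    have hd : (0 : ℝ) < ε ^ 2 + t * t := by nlinarith [mul_self_nonneg t]
    have hgt : g t = t * (ε ^ 2) ^ 2 / (ε ^ 2 + t ^ 2) ^ 2 := by
      simp only [hgdef, hfdef]
      field_simp
      ring
    have hd2 : (0 : ℝ) < (ε ^ 2 + t ^ 2) ^ 2 := by positivity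
    rw [hgt, Real.norm_eq_abs, abs_div, abs_of_pos hd2, abs_mul,
      abs_of_pos (show (0:ℝ) < (ε ^ 2) ^ 2 by positivity), div_le_iff₀ hd2]
    rcases le_total (|t|) ε with hcase | hcase
    · have ht2 : (0:ℝ) ≤ t ^ 2 := sq_nonneg t
      have e1 : |t| * (ε ^ 2) ^ 2 ≤ ε * (ε ^ 2) ^ 2 :=
        mul_le_mul_of_nonneg_right hcase (by positivity)
      have e3 : (ε ^ 2) ^ 2 ≤ (ε ^ 2 + t ^ 2) ^ 2 := by nlinarith
      have e2 : ε * (ε ^ 2) ^ 2 ≤ ε * (ε ^ 2 + t ^ 2) ^ 2 :=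
        mul_le_mul_of_nonneg_left e3 hε.le
      linarith
    · have h3' : ε ^ 3 ≤ |t| ^ 3 := pow_le_pow_left₀ hε.le hcase 3
      have e1 : ε * |t| * ε ^ 3 ≤ ε * |t| * |t| ^ 3 :=
        mul_le_mul_of_nonneg_left h3' (mul_nonneg hε.le (abs_nonneg t))
      have e2 : ε * (|t| ^ 2) ^ 2 ≤ ε * (ε ^ 2 + t ^ 2) ^ 2 := by
        rw [sq_abs]
        nlinarith [mul_nonneg hε.le (mul_nonneg (sq_nonneg ε) (sq_nonneg t)),
          mul_nonneg hε.le (mul_nonneg (sq_nonneg ε) (sq_nonneg ε))]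
      nlinarith [e1, e2]
  calc ‖a - a * c‖ * ‖a - a * c‖ = ‖star (a - a * c) * (a - a * c)‖ :=
        (CStarRing.norm_star_mul_self).symm
    _ = ‖cfcₙ g (star a * a)‖ := by rw [key2]
    _ ≤ ε := hbound
end

section
/- Let A be a C*-algebra. The involutive quantale Max A of closed linear subspaces of A is stably Gelfand: for every closed linear subspace V of A, if the closure of the linear span of VV*V is contained in V, then it equals V. -/
open scoped Pointwise

open scoped ContinuousMapZero NonUnitalContinuousFunctionalCalculus

section Aux

variable {A : Type*} [NonUnitalCStarAlgebra A]

lemma base_mem (V : Submodule ℂ A) {b c d : A} (hb : b ∈ V) (hc : c ∈ V) (hd : d ∈ V) :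
    b * star c * d ∈ qmul (qmul (V : Set A) (star (V : Set A)) : Set A) (V : Set A) := by
  apply Submodule.le_topologicalClosure
  apply Submodule.subset_span
  refine Set.mul_mem_mul ?_ hd
  apply Submodule.le_topologicalClosure
  apply Submodule.subset_span
  exact Set.mul_mem_mul hb (by simpa using hc)

set_option maxHeartbeats 1000000 in
lemma mem_W (V : Submodule ℂ A)
    (hle : qmul (qmul (V : Set A) (star (V : Set A)) : Set A) (V : Set A) ≤ V)
    {a : A} (haV : a ∈ V) :
    a ∈ qmul (qmul (V : Set A) (star (V : Set A)) : Set A) (V : Set A) := by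
  set W := qmul (qmul (V : Set A) (star (V : Set A)) : Set A) (V : Set A) with hWdef
  have hWclosed : IsClosed (W : Set A) := Submodule.isClosed_topologicalClosure _
  set x := star a * a with hxdef
  have hx : IsSelfAdjoint x := IsSelfAdjoint.star_mul_self a
  have hs0 : ∀ t ∈ quasispectrum ℝ x, (0 : ℝ) ≤ t := by
    rw [hxdef, Unitization.quasispectrum_eq_spectrum_inr' ℝ ℂ]
    intro t ht
    rw [Unitization.inr_mul, Unitization.inr_star] at ht
    exact spectrum_star_mul_self_nonneg t ht
  have h0 : ((0 : quasispectrum ℝ x) : ℝ) = 0 := rfl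
  set φ : C(quasispectrum ℝ x, ℝ)₀ →⋆ₙₐ[ℝ] A := cfcₙHom (R := ℝ) hx with hφdef
  have hφid : φ (ContinuousMapZero.id (quasispectrum ℝ x)) = x := cfcₙHom_id hx
  have key : ∀ f : C(quasispectrum ℝ x, ℝ)₀, ∀ b ∈ V, b * φ f ∈ W := by
    intro f
    induction f using ContinuousMapZero.induction_on_of_compact with
    | zero => intro b hb; simp only [map_zero, mul_zero]; exact W.zero_mem
    | id =>
      intro b hb
      rw [hφid, hxdef, ← mul_assoc]
      exact base_mem V hb haV haV
    | star_id =>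
      intro b hb
      have : star (ContinuousMapZero.id (quasispectrum ℝ x)) = ContinuousMapZero.id (quasispectrum ℝ x) := by
        ext t; exact star_trivial _
      rw [this, hφid, hxdef, ← mul_assoc]
      exact base_mem V hb haV haV
    | add f g hf hg =>
      intro b hb
      rw [map_add, mul_add]
      exact W.add_mem (hf b hb) (hg b hb)
    | mul f g hf hg =>
      intro b hb
      rw [map_mul, ← mul_assoc]
      exact hg _ (hle (hf b hb))
    | smul r f hf =>
      intro b hb
      rw [map_smul, mul_smul_comm]
      exact W.smul_of_tower_mem r (hf b hb)
    | frequently f hf =>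
      intro b hb
      have hcont : Continuous fun g : C(quasispectrum ℝ x, ℝ)₀ => b * φ g :=
        (continuous_mul_left b).comp (cfcₙHom_continuous hx)
      have : ∃ᶠ y in nhds (b * φ f), y ∈ (W : Set A) :=
        (hcont.tendsto f).frequently (hf.mono fun g hg => hg b hb)
      have := mem_closure_iff_frequently.mpr this
      rwa [hWclosed.closure_eq] at this
  -- now approximate a
  have : a ∈ closure (W : Set A) := by
    rw [Metric.mem_closure_iff]
    intro ε hε
    set δ : ℝ := ε ^ 2 with hδdef
    have hδ : 0 < δ := by positivity
    have hcontf : Continuous fun t : quasispectrum ℝ x => (t : ℝ) / ((t : ℝ) + δ) := by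
      apply Continuous.div continuous_subtype_val (by fun_prop)
      intro t
      have := hs0 t t.2
      positivity
    set f : C(quasispectrum ℝ x, ℝ)₀ :=
      ⟨⟨fun t => (t : ℝ) / ((t : ℝ) + δ), hcontf⟩, by simp⟩ with hfdef
    set u := φ f with hudef
    have hsf : star f = f := by
      ext t
      exact star_trivial _
    have hu : star u = u := by
      rw [hudef, ← map_star, hsf]
    refine ⟨a * u, key f a haV, ?_⟩
    set c := a - a * u with hcdef
    have hstarc : star c = star a - u * star a := by
      rw [hcdef, star_sub, star_mul, hu]
    set idf : C(quasispectrum ℝ x, ℝ)₀ := ContinuousMapZero.id (quasispectrum ℝ x) with hidfdef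
    set g := idf - idf * f - f * idf + f * (idf * f) with hgdef
    have hcc : star c * c = φ g := by
      rw [hgdef, map_add, map_sub, map_sub, map_mul, map_mul, map_mul, map_mul, hφid,
        ← hudef, hstarc, hcdef, hxdef]
      noncomm_ring
    have hgnorm : ‖g‖ ≤ δ / 4 := by
      rw [ContinuousMapZero.norm_def]
      rw [ContinuousMap.norm_le _ (by positivity)]
      intro t
      have ht0 : (0 : ℝ) ≤ t := hs0 t t.2
      have hval : (g : C(quasispectrum ℝ x, ℝ)) t
          = (t : ℝ) - (t : ℝ) * ((t : ℝ) / ((t : ℝ) + δ))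
            - ((t : ℝ) / ((t : ℝ) + δ)) * (t : ℝ)
            + ((t : ℝ) / ((t : ℝ) + δ)) * ((t : ℝ) * ((t : ℝ) / ((t : ℝ) + δ))) := by
        rfl
      rw [hval]
      have hden : (0 : ℝ) < (t : ℝ) + δ := by positivity
      have heq : (t : ℝ) - (t : ℝ) * ((t : ℝ) / ((t : ℝ) + δ))
            - ((t : ℝ) / ((t : ℝ) + δ)) * (t : ℝ)
            + ((t : ℝ) / ((t : ℝ) + δ)) * ((t : ℝ) * ((t : ℝ) / ((t : ℝ) + δ)))
          = (t : ℝ) * δ ^ 2 / ((t : ℝ) + δ) ^ 2 := by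
        field_simp
        ring
      rw [heq, Real.norm_eq_abs, abs_of_nonneg (by positivity)]
      rw [div_le_iff₀ (by positivity)]
      nlinarith [sq_nonneg ((t : ℝ) - δ)]
    have hccle : ‖c‖ * ‖c‖ ≤ δ / 4 := by
      rw [← CStarRing.norm_star_mul_self, hcc]
      calc ‖φ g‖ = ‖g‖ := norm_cfcₙHom x g hx
        _ ≤ δ / 4 := hgnorm
    have : dist a (a * u) = ‖c‖ := by rw [dist_eq_norm, hcdef]
    rw [this]
    nlinarith [norm_nonneg c, hε]
  rwa [hWclosed.closure_eq] at this

end Aux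

/-- `Max A` is stably Gelfand: for a closed linear subspace `V`, if the closure of the
linear span of `VV*V` is contained in `V` then it is equal to `V`. -/
theorem stmt1 {A : Type*} [NonUnitalCStarAlgebra A] (V : Submodule ℂ A)
    (hV : IsClosed (V : Set A))
    (h : qmul (qmul (V : Set A) (star (V : Set A)) : Set A) (V : Set A) ≤ V) :
    qmul (qmul (V : Set A) (star (V : Set A)) : Set A) (V : Set A) = V :=
  le_antisymm h (fun _ ha => mem_W V h ha)
end

section
/- Let A be a C*-algebra, B ⊆ A a commutative norm-closed self-adjoint subalgebra, and n ∈ A a normalizer of B. Then the closure of the linear span of nB equals the closure of the linear span of BnB, and in particular also equals the closure of the linear span of Bn. -/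
open scoped Pointwise

set_option maxHeartbeats 1000000

noncomputable section

variable {A : Type*} [NonUnitalCStarAlgebra A]

/-- `nupow d m = d ^ (m + 1)` in a possibly non-unital algebra. -/
def nupow (d : A) : ℕ → A
  | 0 => d
  | (m + 1) => d * nupow d m

lemma nupow_succ' (d : A) (m : ℕ) : nupow d (m + 1) = nupow d m * d := by
  induction m with
  | zero => rfl
  | succ k ih =>
    calc nupow d (k + 2) = d * nupow d (k + 1) := rfl
    _ = d * (nupow d k * d) := by rw [ih]
    _ = (d * nupow d k) * d := (mul_assoc _ _ _).symm
    _ = nupow d (k + 1) * d := rfl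

lemma keyL (w : A) {ε : ℝ} (hε : 0 < ε) :
    ∃ φ ∈ Submodule.span ℂ (Set.range (nupow (w * star w))),
      IsSelfAdjoint φ ∧ ‖w - φ * w‖ ≤ ε := by
  set d := w * star w with hd_def
  have hdsa : IsSelfAdjoint d := IsSelfAdjoint.mul_star_self w
  by_cases hM : ‖d‖ = 0
  · refine ⟨0, Submodule.zero_mem _, IsSelfAdjoint.zero A, ?_⟩
    have hd0 : d = 0 := norm_eq_zero.mp hM
    have h2 : ‖w‖ * ‖w‖ = 0 := by
      rw [← CStarRing.norm_self_mul_star, ← hd_def, hd0, norm_zero]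
    have hw : ‖w‖ = 0 := by nlinarith [norm_nonneg w]
    simp only [zero_mul, sub_zero]
    rw [hw]; exact hε.le
  have hM0 : 0 < ‖d‖ := lt_of_le_of_ne (norm_nonneg d) (Ne.symm hM)
  -- quasispectrum bound
  have hspec : ∀ t ∈ quasispectrum ℝ d, |t| ≤ ‖d‖ := by
    intro t ht
    have h1 : ‖(id : ℝ → ℝ) t‖ ≤ ‖cfcₙ (id : ℝ → ℝ) d‖ :=
      norm_apply_le_norm_cfcₙ (id : ℝ → ℝ) d ht
    rwa [cfcₙ_id ℝ d] at h1
  -- choose k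
  have hδ0 : 0 < min (ε ^ 2) ‖d‖ := lt_min (by positivity) hM0
  have hδM : min (ε ^ 2) ‖d‖ ≤ ‖d‖ := min_le_right _ _
  have hr0 : 0 ≤ 1 - (min (ε ^ 2) ‖d‖) ^ 2 / ‖d‖ ^ 2 := by
    have h1 : (min (ε ^ 2) ‖d‖) ^ 2 ≤ ‖d‖ ^ 2 := by nlinarith
    have h2 : (min (ε ^ 2) ‖d‖) ^ 2 / ‖d‖ ^ 2 ≤ 1 := by
      rw [div_le_one (by positivity)]; exact h1
    linarith
  have hr1 : 1 - (min (ε ^ 2) ‖d‖) ^ 2 / ‖d‖ ^ 2 < 1 := by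
    have : 0 < (min (ε ^ 2) ‖d‖) ^ 2 / ‖d‖ ^ 2 := by positivity
    linarith
  obtain ⟨k, hk⟩ : ∃ k : ℕ, (1 - (min (ε ^ 2) ‖d‖) ^ 2 / ‖d‖ ^ 2) ^ k < ε ^ 2 / ‖d‖ :=
    exists_pow_lt_of_lt_one (by positivity) hr1
  -- the function
  set p : ℝ → ℝ := fun t => 1 - (1 - t ^ 2 / ‖d‖ ^ 2) ^ k with hp_def
  have hφsa : IsSelfAdjoint (cfcₙ p d) := cfcₙ_predicate p d
  refine ⟨cfcₙ p d, ?_, hφsa, ?_⟩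
  · -- membership
    have hdmul : ∀ x ∈ Submodule.span ℂ (Set.range (nupow d)),
        d * x ∈ Submodule.span ℂ (Set.range (nupow d)) := by
      intro x hx
      induction hx using Submodule.span_induction with
      | mem x hx =>
        obtain ⟨m, rfl⟩ := hx
        exact Submodule.subset_span ⟨m + 1, rfl⟩
      | zero => rw [mul_zero]; exact Submodule.zero_mem _
      | add x y _ _ hx hy => rw [mul_add]; exact Submodule.add_mem _ hx hy
      | smul c x _ hx => rw [mul_smul_comm]; exact Submodule.smul_mem _ c hx
    have hmem : ∀ j : ℕ, cfcₙ (fun t : ℝ => 1 - (1 - t ^ 2 / ‖d‖ ^ 2) ^ j) d ∈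
        Submodule.span ℂ (Set.range (nupow d)) := by
      intro j
      induction j with
      | zero =>
        have h0 : (fun t : ℝ => 1 - (1 - t ^ 2 / ‖d‖ ^ 2) ^ 0) = (fun _ : ℝ => (0 : ℝ)) := by
          funext t; simp
        rw [h0, cfcₙ_const_zero]
        exact Submodule.zero_mem _
      | succ j ih =>
        have hfun : (fun t : ℝ => 1 - (1 - t ^ 2 / ‖d‖ ^ 2) ^ (j + 1)) =
            fun t => (1 - (1 - t ^ 2 / ‖d‖ ^ 2) ^ j) +
              ((‖d‖ ^ 2)⁻¹ * (t * t) -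
               (‖d‖ ^ 2)⁻¹ * (t * (t * (1 - (1 - t ^ 2 / ‖d‖ ^ 2) ^ j)))) := by
          funext t
          have hne : (‖d‖ : ℝ) ^ 2 ≠ 0 := by positivity
          ring
        rw [hfun]
        rw [cfcₙ_add _ _ d (by fun_prop) (by simp) (by fun_prop) (by simp)]
        refine Submodule.add_mem _ ih ?_
        rw [cfcₙ_sub _ _ d (by fun_prop) (by simp) (by fun_prop) (by simp)]
        refine Submodule.sub_mem _ ?_ ?_
        · rw [cfcₙ_const_mul _ _ d (by fun_prop) (by simp)]
          rw [cfcₙ_mul _ _ d (by fun_prop) (by simp) (by fun_prop) (by simp)]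
          rw [cfcₙ_id' ℝ d]
          have : ((‖d‖ ^ 2)⁻¹ : ℝ) • (d * d) = (((‖d‖ ^ 2)⁻¹ : ℝ) : ℂ) • (d * d) := by
            rw [← algebraMap_smul (R := ℝ) ℂ, Complex.coe_algebraMap]
          rw [this]
          exact Submodule.smul_mem _ _ (Submodule.subset_span ⟨1, rfl⟩)
        · rw [cfcₙ_const_mul _ _ d (by fun_prop) (by simp)]
          rw [cfcₙ_mul _ _ d (by fun_prop) (by simp) (by fun_prop) (by simp)]
          rw [cfcₙ_mul _ _ d (by fun_prop) (by simp) (by fun_prop) (by simp)]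
          rw [cfcₙ_id' ℝ d]
          have hrw : ((‖d‖ ^ 2)⁻¹ : ℝ) • (d * (d * cfcₙ (fun t : ℝ => 1 - (1 - t ^ 2 / ‖d‖ ^ 2) ^ j) d)) =
              (((‖d‖ ^ 2)⁻¹ : ℝ) : ℂ) • (d * (d * cfcₙ (fun t : ℝ => 1 - (1 - t ^ 2 / ‖d‖ ^ 2) ^ j) d)) := by
            rw [← algebraMap_smul (R := ℝ) ℂ, Complex.coe_algebraMap]
          rw [hrw]
          exact Submodule.smul_mem _ _ (hdmul _ (hdmul _ ih))
    exact hmem k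
  · -- the estimate
    have hstar : star (cfcₙ p d) = cfcₙ p d := hφsa
    have hexpand : (w - cfcₙ p d * w) * star (w - cfcₙ p d * w) =
        cfcₙ (fun t => t * (1 - p t) ^ 2) d := by
      have hrhs : cfcₙ (fun t => t * (1 - p t) ^ 2) d =
          d - (d * cfcₙ p d + (cfcₙ p d * d - cfcₙ p d * d * cfcₙ p d)) := by
        have hfun : (fun t : ℝ => t * (1 - p t) ^ 2) =
            fun t => t - (t * p t + (p t * t - p t * (t * p t))) := by
          funext t; ring
        rw [hfun]
        rw [cfcₙ_sub _ _ d (by fun_prop) (by simp) (by fun_prop) (by simp [hp_def])]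
        rw [cfcₙ_add _ _ d (by fun_prop) (by simp [hp_def]) (by fun_prop) (by simp [hp_def])]
        rw [cfcₙ_sub _ _ d (by fun_prop) (by simp [hp_def]) (by fun_prop) (by simp [hp_def])]
        rw [cfcₙ_mul _ _ d (by fun_prop) (by simp) (by fun_prop) (by simp [hp_def])]
        rw [cfcₙ_mul (fun t : ℝ => p t) _ d (by fun_prop) (by simp [hp_def]) (by fun_prop) (by simp)]
        rw [cfcₙ_mul (fun t : ℝ => p t) _ d (by fun_prop) (by simp [hp_def]) (by fun_prop) (by simp [hp_def])]
        rw [cfcₙ_mul _ _ d (by fun_prop) (by simp) (by fun_prop) (by simp [hp_def])]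
        rw [cfcₙ_id' ℝ d]
        simp only [mul_assoc]
      rw [hrhs, star_sub, star_mul, hstar, hd_def]
      noncomm_ring
    have hnorm2 : ‖(w - cfcₙ p d * w) * star (w - cfcₙ p d * w)‖ ≤ ε ^ 2 := by
      rw [hexpand]
      refine norm_cfcₙ_le fun t ht => ?_
      have habs := hspec t ht
      have ht2 : t ^ 2 ≤ ‖d‖ ^ 2 := by nlinarith [abs_nonneg t, sq_abs t]
      have hu0 : 0 ≤ 1 - t ^ 2 / ‖d‖ ^ 2 := by
        have : t ^ 2 / ‖d‖ ^ 2 ≤ 1 := by rw [div_le_one (by positivity)]; exact ht2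
        linarith
      have hu1 : 1 - t ^ 2 / ‖d‖ ^ 2 ≤ 1 := by
        have : 0 ≤ t ^ 2 / ‖d‖ ^ 2 := by positivity
        linarith
      have hval : t * (1 - p t) ^ 2 = t * ((1 - t ^ 2 / ‖d‖ ^ 2) ^ k) ^ 2 := by
        simp only [hp_def]; ring
      rw [Real.norm_eq_abs, hval, abs_mul, abs_of_nonneg (by positivity : (0:ℝ) ≤ ((1 - t ^ 2 / ‖d‖ ^ 2) ^ k) ^ 2)]
      rcases le_or_gt (|t|) (min (ε ^ 2) ‖d‖) with hcase | hcase
      · have hpow : ((1 - t ^ 2 / ‖d‖ ^ 2) ^ k) ^ 2 ≤ 1 := by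
          have h1 := pow_le_one₀ hu0 hu1 (n := k)
          have h2 := pow_nonneg hu0 k
          nlinarith
        calc |t| * ((1 - t ^ 2 / ‖d‖ ^ 2) ^ k) ^ 2 ≤ |t| * 1 := by
              apply mul_le_mul_of_nonneg_left hpow (abs_nonneg t)
        _ = |t| := mul_one _
        _ ≤ min (ε ^ 2) ‖d‖ := hcase
        _ ≤ ε ^ 2 := min_le_left _ _
      · have hsq : (min (ε ^ 2) ‖d‖) ^ 2 ≤ t ^ 2 := by
          nlinarith [sq_abs t, hδ0]
        have hu_le : 1 - t ^ 2 / ‖d‖ ^ 2 ≤ 1 - (min (ε ^ 2) ‖d‖) ^ 2 / ‖d‖ ^ 2 := by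
          have h1 : (min (ε ^ 2) ‖d‖) ^ 2 / ‖d‖ ^ 2 ≤ t ^ 2 / ‖d‖ ^ 2 := by gcongr
          linarith
        have hpk : (1 - t ^ 2 / ‖d‖ ^ 2) ^ k ≤ (1 - (min (ε ^ 2) ‖d‖) ^ 2 / ‖d‖ ^ 2) ^ k :=
          pow_le_pow_left₀ hu0 hu_le k
        have hrk1 : (1 - (min (ε ^ 2) ‖d‖) ^ 2 / ‖d‖ ^ 2) ^ k ≤ 1 := pow_le_one₀ hr0 hr1.le
        have hrk0 : (0:ℝ) ≤ (1 - (min (ε ^ 2) ‖d‖) ^ 2 / ‖d‖ ^ 2) ^ k := pow_nonneg hr0 k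
        have hkM : (1 - (min (ε ^ 2) ‖d‖) ^ 2 / ‖d‖ ^ 2) ^ k * ‖d‖ < ε ^ 2 :=
          (lt_div_iff₀ hM0).mp hk
        have hpk0 : (0:ℝ) ≤ (1 - t ^ 2 / ‖d‖ ^ 2) ^ k := pow_nonneg hu0 k
        have h1 : ((1 - t ^ 2 / ‖d‖ ^ 2) ^ k) ^ 2 ≤ (1 - (min (ε ^ 2) ‖d‖) ^ 2 / ‖d‖ ^ 2) ^ k := by
          nlinarith
        refine le_of_lt ?_
        calc |t| * ((1 - t ^ 2 / ‖d‖ ^ 2) ^ k) ^ 2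
            ≤ ‖d‖ * ((1 - t ^ 2 / ‖d‖ ^ 2) ^ k) ^ 2 := by
              apply mul_le_mul_of_nonneg_right habs (by positivity)
          _ ≤ ‖d‖ * ((1 - (min (ε ^ 2) ‖d‖) ^ 2 / ‖d‖ ^ 2) ^ k) := by
              apply mul_le_mul_of_nonneg_left h1 hM0.le
          _ < ε ^ 2 := by linarith [hkM]
    have hfin : ‖w - cfcₙ p d * w‖ ^ 2 ≤ ε ^ 2 := by
      rw [sq, ← CStarRing.norm_self_mul_star]
      exact hnorm2
    nlinarith [norm_nonneg (w - cfcₙ p d * w)]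


lemma keyR (w : A) {ε : ℝ} (hε : 0 < ε) :
    ∃ ψ ∈ Submodule.span ℂ (Set.range (nupow (star w * w))), ‖w - w * ψ‖ ≤ ε := by
  obtain ⟨φ, hφmem, hφsa, hest⟩ := keyL (star w) hε
  rw [star_star] at hφmem
  refine ⟨φ, hφmem, ?_⟩
  calc ‖w - w * φ‖ = ‖star (star w - φ * star w)‖ := by
        rw [star_sub, star_mul, star_star, hφsa.star_eq]
  _ = ‖star w - φ * star w‖ := norm_star _
  _ ≤ ε := hest

lemma cspan_le_cspan {S T : Set A} (h : S ⊆ (cspan T : Set A)) : cspan S ≤ cspan T := by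
  unfold cspan
  apply Submodule.topologicalClosure_minimal
  · exact Submodule.span_le.mpr h
  · exact Submodule.isClosed_topologicalClosure _

lemma mem_cspan_of_approx {T : Set A} {x : A}
    (h : ∀ ε : ℝ, 0 < ε → ∃ y ∈ Submodule.span ℂ T, ‖x - y‖ < ε) : x ∈ cspan T := by
  show x ∈ (Submodule.span ℂ T).topologicalClosure
  rw [← SetLike.mem_coe, Submodule.topologicalClosure_coe, Metric.mem_closure_iff]
  intro ε hε
  obtain ⟨y, hy, hxy⟩ := h ε hε
  exact ⟨y, hy, by rwa [dist_eq_norm]⟩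


end

/-- For a commutative norm-closed self-adjoint subalgebra `B ⊆ A` and a normalizer `n`
of `B`, the closed linear span of `nB` equals the closed linear span of `BnB`, and in
particular also equals the closed linear span of `Bn`. -/
theorem stmt11 {A : Type*} [NonUnitalCStarAlgebra A] (B : Submodule ℂ A)
    (hclosed : IsClosed (B : Set A))
    (hmulB : ∀ x ∈ B, ∀ y ∈ B, x * y ∈ B)
    (hstarB : ∀ x ∈ B, star x ∈ B)
    (hcomm : ∀ x ∈ B, ∀ y ∈ B, x * y = y * x)
    (n : A) (hnorm : ∀ b ∈ B, n * b * star n ∈ B ∧ star n * b * n ∈ B) :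
    cspan (({n} : Set A) * (B : Set A)) = cspan ((B : Set A) * {n} * (B : Set A)) ∧
    cspan ((B : Set A) * ({n} : Set A)) = cspan ((B : Set A) * {n} * (B : Set A)) := by
  have hnupowB : ∀ x ∈ B, ∀ m : ℕ, nupow x m ∈ B := by
    intro x hx m
    induction m with
    | zero => exact hx
    | succ j ih => exact hmulB _ hx _ ih
  -- Inclusion 1 : nB ⊆ cspan (BnB)
  have incl1 : ({n} : Set A) * (B : Set A) ⊆
      (cspan ((B : Set A) * {n} * (B : Set A)) : Set A) := by
    rintro x hx
    rw [Set.mem_mul] at hx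
    obtain ⟨u, hu, b, hb, rfl⟩ := hx
    rw [Set.mem_singleton_iff] at hu; rw [hu]
    apply mem_cspan_of_approx
    intro ε hε
    obtain ⟨φ, hφmem, hφsa, hest⟩ := keyL (n * b) (half_pos hε)
    have hdB : (n * b) * star (n * b) ∈ B := by
      have hrw : (n * b) * star (n * b) = n * (b * star b) * star n := by
        rw [star_mul]; simp only [mul_assoc]
      rw [hrw]; exact (hnorm _ (hmulB _ hb _ (hstarB _ hb))).1
    have hφB : φ ∈ B := by
      refine Submodule.span_le.mpr ?_ hφmem
      rintro _ ⟨m, rfl⟩; exact hnupowB _ hdB m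
    refine ⟨φ * (n * b), ?_, ?_⟩
    · apply Submodule.subset_span
      rw [← mul_assoc]
      exact Set.mul_mem_mul (Set.mul_mem_mul hφB (Set.mem_singleton n)) hb
    · exact lt_of_le_of_lt hest (half_lt_self hε)
  -- Inclusion 2 : Bn ⊆ cspan (BnB)
  have incl2 : (B : Set A) * ({n} : Set A) ⊆
      (cspan ((B : Set A) * {n} * (B : Set A)) : Set A) := by
    rintro x hx
    rw [Set.mem_mul] at hx
    obtain ⟨b, hb, u, hu, rfl⟩ := hx
    rw [Set.mem_singleton_iff] at hu; rw [hu]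
    apply mem_cspan_of_approx
    intro ε hε
    obtain ⟨ψ, hψmem, hest⟩ := keyR (b * n) (half_pos hε)
    have heB : star (b * n) * (b * n) ∈ B := by
      have hrw : star (b * n) * (b * n) = star n * (star b * b) * n := by
        rw [star_mul]; simp only [mul_assoc]
      rw [hrw]; exact (hnorm _ (hmulB _ (hstarB _ hb) _ hb)).2
    have hψB : ψ ∈ B := by
      refine Submodule.span_le.mpr ?_ hψmem
      rintro _ ⟨m, rfl⟩; exact hnupowB _ heB m
    refine ⟨(b * n) * ψ, ?_, ?_⟩
    · exact Submodule.subset_span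
        (Set.mul_mem_mul (Set.mul_mem_mul hb (Set.mem_singleton n)) hψB)
    · exact lt_of_le_of_lt hest (half_lt_self hε)
  -- Inclusion 3 : BnB ⊆ cspan (nB)
  have incl3 : (B : Set A) * {n} * (B : Set A) ⊆
      (cspan (({n} : Set A) * (B : Set A)) : Set A) := by
    rintro x hx
    rw [Set.mem_mul] at hx
    obtain ⟨u, hu, b', hb', rfl⟩ := hx
    rw [Set.mem_mul] at hu
    obtain ⟨b, hb, v, hv, rfl⟩ := hu
    rw [Set.mem_singleton_iff] at hv; rw [hv]
    apply mem_cspan_of_approx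
    intro ε hε
    have hb1 : (0:ℝ) < ‖b‖ + 1 := by positivity
    have hε' : 0 < ε / (‖b‖ + 1) := by positivity
    obtain ⟨φ, hφmem, hφsa, hest⟩ := keyL (n * b') hε'
    have hc : b' * star b' ∈ B := hmulB _ hb' _ (hstarB _ hb')
    have hncn : n * (b' * star b') * star n ∈ B := (hnorm _ hc).1
    have hdw : (n * b') * star (n * b') = n * (b' * star b') * star n := by
      rw [star_mul]; simp only [mul_assoc]
    rw [hdw] at hφmem
    have hkey : ∀ β ∈ B, β * ((n * (b' * star b') * star n) * (n * b')) ∈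
        ({n} : Set A) * (B : Set A) := by
      intro β hβ
      have hcomm' : β * (n * (b' * star b') * star n) =
          (n * (b' * star b') * star n) * β := hcomm _ hβ _ hncn
      have hid : β * ((n * (b' * star b') * star n) * (n * b')) =
          n * ((b' * star b') * ((star n * β * n) * b')) := by
        rw [← mul_assoc, hcomm']; simp only [mul_assoc]
      rw [hid]
      exact Set.mul_mem_mul (Set.mem_singleton n)
        (hmulB _ hc _ (hmulB _ (hnorm _ hβ).2 _ hb'))
    have hgen : ∀ m : ℕ, b * (nupow (n * (b' * star b') * star n) m * (n * b')) ∈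
        ({n} : Set A) * (B : Set A) := by
      intro m
      cases m with
      | zero => exact hkey b hb
      | succ m =>
        have hrw : b * (nupow (n * (b' * star b') * star n) (m + 1) * (n * b')) =
            (b * nupow (n * (b' * star b') * star n) m) *
              ((n * (b' * star b') * star n) * (n * b')) := by
          rw [nupow_succ']; simp only [mul_assoc]
        rw [hrw]
        exact hkey _ (hmulB _ hb _ (hnupowB _ hncn m))
    have hy : ∀ χ ∈ Submodule.span ℂ (Set.range (nupow (n * (b' * star b') * star n))),
        b * (χ * (n * b')) ∈ Submodule.span ℂ (({n} : Set A) * (B : Set A)) := by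
      intro χ hχ
      induction hχ using Submodule.span_induction with
      | mem ψ hψ =>
        obtain ⟨m, rfl⟩ := hψ
        exact Submodule.subset_span (hgen m)
      | zero => rw [zero_mul, mul_zero]; exact Submodule.zero_mem _
      | add ψ χ' _ _ hψ hχ' => rw [add_mul, mul_add]; exact Submodule.add_mem _ hψ hχ'
      | smul c ψ _ hψ => rw [smul_mul_assoc, mul_smul_comm]; exact Submodule.smul_mem _ c hψ
    refine ⟨b * (φ * (n * b')), hy φ hφmem, ?_⟩
    have hdiff : b * n * b' - b * (φ * (n * b')) = b * ((n * b') - φ * (n * b')) := by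
      noncomm_ring
    rw [hdiff]
    calc ‖b * ((n * b') - φ * (n * b'))‖ ≤ ‖b‖ * ‖(n * b') - φ * (n * b')‖ := norm_mul_le _ _
    _ ≤ ‖b‖ * (ε / (‖b‖ + 1)) := by
        apply mul_le_mul_of_nonneg_left hest (norm_nonneg b)
    _ < (‖b‖ + 1) * (ε / (‖b‖ + 1)) := by
        apply mul_lt_mul_of_pos_right (lt_add_one _) hε'
    _ = ε := by field_simp
  -- Inclusion 4 : BnB ⊆ cspan (Bn)
  have incl4 : (B : Set A) * {n} * (B : Set A) ⊆
      (cspan ((B : Set A) * ({n} : Set A)) : Set A) := by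
    rintro x hx
    rw [Set.mem_mul] at hx
    obtain ⟨u, hu, b', hb', rfl⟩ := hx
    rw [Set.mem_mul] at hu
    obtain ⟨b, hb, v, hv, rfl⟩ := hu
    rw [Set.mem_singleton_iff] at hv; rw [hv]
    apply mem_cspan_of_approx
    intro ε hε
    have hb1 : (0:ℝ) < ‖b'‖ + 1 := by positivity
    have hε' : 0 < ε / (‖b'‖ + 1) := by positivity
    obtain ⟨ψ, hψmem, hest⟩ := keyR (b * n) hε'
    have hc : star b * b ∈ B := hmulB _ (hstarB _ hb) _ hb
    have hncn : star n * (star b * b) * n ∈ B := (hnorm _ hc).2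
    have hew : star (b * n) * (b * n) = star n * (star b * b) * n := by
      rw [star_mul]; simp only [mul_assoc]
    rw [hew] at hψmem
    have hkey : ∀ γ ∈ B, (b * n) * ((star n * (star b * b) * n) * γ) ∈
        (B : Set A) * ({n} : Set A) := by
      intro γ hγ
      have hcomm' : (star n * (star b * b) * n) * γ =
          γ * (star n * (star b * b) * n) := hcomm _ hncn _ hγ
      have hid : (b * n) * ((star n * (star b * b) * n) * γ) =
          (b * ((n * γ * star n) * (star b * b))) * n := by
        rw [hcomm']; simp only [mul_assoc]
      rw [hid]
      exact Set.mul_mem_mul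
        (hmulB _ hb _ (hmulB _ (hnorm _ hγ).1 _ hc)) (Set.mem_singleton n)
    have hgen : ∀ m : ℕ, ((b * n) * nupow (star n * (star b * b) * n) m) * b' ∈
        (B : Set A) * ({n} : Set A) := by
      intro m
      cases m with
      | zero =>
        have hrw : ((b * n) * nupow (star n * (star b * b) * n) 0) * b' =
            (b * n) * ((star n * (star b * b) * n) * b') := by
          show ((b * n) * (star n * (star b * b) * n)) * b' = _
          simp only [mul_assoc]
        rw [hrw]
        exact hkey b' hb'
      | succ m =>
        have hrw : ((b * n) * nupow (star n * (star b * b) * n) (m + 1)) * b' =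
            (b * n) * ((star n * (star b * b) * n) *
              (nupow (star n * (star b * b) * n) m * b')) := by
          show ((b * n) * ((star n * (star b * b) * n) *
            nupow (star n * (star b * b) * n) m)) * b' = _
          simp only [mul_assoc]
        rw [hrw]
        exact hkey _ (hmulB _ (hnupowB _ hncn m) _ hb')
    have hy : ∀ χ ∈ Submodule.span ℂ (Set.range (nupow (star n * (star b * b) * n))),
        ((b * n) * χ) * b' ∈ Submodule.span ℂ ((B : Set A) * ({n} : Set A)) := by
      intro χ hχ
      induction hχ using Submodule.span_induction with
      | mem χ' hχ' =>
        obtain ⟨m, rfl⟩ := hχ'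
        exact Submodule.subset_span (hgen m)
      | zero => rw [mul_zero, zero_mul]; exact Submodule.zero_mem _
      | add χ' χ'' _ _ hχ' hχ'' => rw [mul_add, add_mul]; exact Submodule.add_mem _ hχ' hχ''
      | smul c χ' _ hχ' => rw [mul_smul_comm, smul_mul_assoc]; exact Submodule.smul_mem _ c hχ'
    refine ⟨((b * n) * ψ) * b', hy ψ hψmem, ?_⟩
    have hdiff : b * n * b' - ((b * n) * ψ) * b' = ((b * n) - (b * n) * ψ) * b' := by
      noncomm_ring
    rw [hdiff]
    calc ‖((b * n) - (b * n) * ψ) * b'‖ ≤ ‖(b * n) - (b * n) * ψ‖ * ‖b'‖ := norm_mul_le _ _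
    _ ≤ (ε / (‖b'‖ + 1)) * ‖b'‖ := by
        apply mul_le_mul_of_nonneg_right hest (norm_nonneg b')
    _ < (ε / (‖b'‖ + 1)) * (‖b'‖ + 1) := by
        apply mul_lt_mul_of_pos_left (lt_add_one _) hε'
    _ = ε := by field_simp
  exact ⟨le_antisymm (cspan_le_cspan incl1) (cspan_le_cspan incl3),
    le_antisymm (cspan_le_cspan incl2) (cspan_le_cspan incl4)⟩
end
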